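/- For all Borel probability measures ρ, ρ' on [0,1], the function α ↦ z(αρ + (1-α)ρ') is continuous on [0,1]. -/

import Mathlib

open MeasureTheory ProbabilityTheory Filter Set
open scoped Classical ENNReal NNReal ENat

namespace OrgCrit

/-- Vertices of the rooted `b`-ary tree: finite sequences over `Fin b`,
with the root `[]`; the parent of a nonempty sequence is its `tail`
(the head being the deepest coordinate). -/
abbrev V (b : ℕ) := List (Fin b)

/-- One step of the avalanche dynamics. -/
noncomputable def nextConf (b : ℕ) (f : V b → ℝ) : V b → ℝ := fun σ =>
  match σ with
  | [] => if 1 ≤ f [] then 0 else f []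
  | _ :: l => if 1 ≤ f l then f σ + f l / (b : ℝ)
      else if 1 ≤ f σ then 0 else f σ

/-- The avalanche process `X^{(v)}(t)` started from configuration `x` with `v` added
at the root. -/
noncomputable def conf (b : ℕ) (x : V b → ℝ) (v : ℝ) : ℕ → V b → ℝ
  | 0 => fun σ => if σ = [] then x [] + v else x σ
  | t + 1 => nextConf b (conf b x v t)

/-- The avalanche set `A^{(v)}`. -/
def avalSet (b : ℕ) (x : V b → ℝ) (v : ℝ) : Set (V b) :=
  {σ | ∃ t, conf b x v t σ = 0 ∧ ∃ s < t, conf b x v s σ ≠ 0}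

/-- `x_* = sup {y ∈ [0,1] : ρ([y,1]) > 0}`. -/
noncomputable def xStar (ρ : Measure ℝ) : ℝ :=
  sSup {y : ℝ | y ∈ Set.Icc (0 : ℝ) 1 ∧ 0 < ρ (Set.Icc y 1)}

/-- `θ_b = b x_* / (b-1)`. -/
noncomputable def thetaB (b : ℕ) (ρ : Measure ℝ) : ℝ := (b : ℝ) * xStar ρ / ((b : ℝ) - 1)

/-- `Q_n^{(θ)}` built from the sequence `x` (`X_k = x k`, indexed from 1). -/
noncomputable def Qseq (b : ℕ) (θ : ℝ) (x : ℕ → ℝ) : ℕ → ℝ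
  | 0 => θ
  | n + 1 => x (n + 1) + Qseq b θ x n / (b : ℝ)

/-- `Z_n(θ) = P(Q_k^{(θ)} ≥ 1, k = 0,…,n)`. -/
noncomputable def Zfun (b : ℕ) (P : Measure (ℕ → ℝ)) (n : ℕ) (θ : ℝ) : ℝ :=
  (P {x | ∀ k ≤ n, 1 ≤ Qseq b θ x k}).toReal

/-- `Q_{n,k}^{(θ)} = Y_k + Y_{k+1}/b + … + Y_n/b^{n-k} + θ/b^{n-k+1}` (`Y_i = y i`). -/
noncomputable def Qnk (b : ℕ) (θ : ℝ) (y : ℕ → ℝ) (n k : ℕ) : ℝ :=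
  (∑ j ∈ Finset.range (n - k + 1), y (k + j) / (b : ℝ) ^ j) + θ / (b : ℝ) ^ (n - k + 1)

/-- The conditional law `P_n^{(θ)} = P( · | Q_{n,ℓ}^{(θ)} ≥ 1, ℓ = 2,…,n)`. -/
noncomputable def PnTheta (b : ℕ) (P : Measure (ℕ → ℝ)) (n : ℕ) (θ : ℝ) : Measure (ℕ → ℝ) :=
  ProbabilityTheory.cond P {y | ∀ ℓ, 2 ≤ ℓ → ℓ ≤ n → 1 ≤ Qnk b θ y n ℓ}

/-- `Q_∞ = ∑_{k ≥ 1} Y_k b^{-(k-1)}`. -/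
noncomputable def Qinf (b : ℕ) (y : ℕ → ℝ) : ℝ := ∑' k : ℕ, y (k + 1) / (b : ℝ) ^ k

/-- `Φ_b(y) = 1 - (1-y)^b`. -/
noncomputable def Phib (b : ℕ) (y : ℝ) : ℝ := 1 - (1 - y) ^ b

/-- `V_n`, the least addition at the root making the avalanche survive `n` steps. -/
noncomputable def Vmin (b : ℕ) (x : V b → ℝ) (n : ℕ) : ℝ :=
  sInf {v : ℝ | 0 < v ∧ ∀ t < n, conf b x v (t + 1) ≠ conf b x v t}

/-- `Ψ_n(ϑ)`, the distribution function of `V_n` (with `Ψ_0 = 1_{ϑ ≥ 0}`). -/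
noncomputable def Psi (b : ℕ) (P : Measure (V b → ℝ)) (n : ℕ) (ϑ : ℝ) : ℝ :=
  if n = 0 then (if 0 ≤ ϑ then 1 else 0) else (P {x | Vmin b x n ≤ ϑ}).toReal

/-- Bernoulli law on `Bool` with success probability `l`. -/
noncomputable def bern (l : ℝ) : Measure Bool :=
  ENNReal.ofReal l • Measure.dirac true + ENNReal.ofReal (1 - l) • Measure.dirac false

/-- The avalanche set `A^{(θ - X_∅)}` of the avalanche started with total value `θ`
at the root, with the convention that it is empty whenever `θ < 1`. -/
noncomputable def avalSetTheta (b : ℕ) (x : V b → ℝ) (θ : ℝ) : Set (V b) :=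
  if θ < 1 then ∅ else avalSet b x (θ - x [])

/-- `B^{(θ)}`: equal to `{∅}` if `A^{(θ-X_∅)} = ∅`, and to `{σ : m(σ) ∈ A^{(θ-X_∅)}}`
otherwise. -/
noncomputable def Bset (b : ℕ) (x : V b → ℝ) (θ : ℝ) : Set (V b) :=
  if avalSetTheta b x θ = ∅ then {([] : V b)}
  else {σ : V b | σ ≠ [] ∧ σ.tail ∈ avalSetTheta b x θ}

/-- `B_∞(θ, λ) = P_{ρ,λ}(B^{(θ)} ∩ G ≠ ∅)`, where the first component of the coordinate
at `σ` is `X_σ` and the second one indicates whether `σ` is green. -/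
noncomputable def Binfty (b : ℕ) (PJ : Measure (V b → ℝ × Bool)) (θ : ℝ) : ℝ :=
  (PJ {ω | ∃ σ ∈ Bset b (fun τ => (ω τ).1) θ, (ω σ).2 = true}).toReal

/-- The coordinates of `P` (a measure on `ℕ → ℝ`) are i.i.d. with law `ρ`. -/
def IsProjIID (ρ : Measure ℝ) (P : Measure (ℕ → ℝ)) : Prop :=
  IsProbabilityMeasure P ∧
  iIndepFun (fun i (x : ℕ → ℝ) => x i) P ∧
  ∀ i : ℕ, Measure.map (fun x : ℕ → ℝ => x i) P = ρ

/-- The coordinates of `P` (a measure on configurations on the tree) are i.i.d. with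
law `ρ`. -/
def IsTreeIID (b : ℕ) (ρ : Measure ℝ) (P : Measure (V b → ℝ)) : Prop :=
  IsProbabilityMeasure P ∧
  iIndepFun (fun σ (x : V b → ℝ) => x σ) P ∧
  ∀ σ : V b, Measure.map (fun x : V b → ℝ => x σ) P = ρ

/-- Joint law of the values and of the green sites: the coordinates are i.i.d., each with
law `ρ ⊗ Bernoulli(l)`. -/
def IsTreeGreenIID (b : ℕ) (ρ : Measure ℝ) (l : ℝ) (P : Measure (V b → ℝ × Bool)) : Prop :=
  IsProbabilityMeasure P ∧
  iIndepFun
    (fun σ (ω : V b → ℝ × Bool) => ω σ) P ∧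
  ∀ σ : V b, Measure.map (fun ω : V b → ℝ × Bool => ω σ) P = ρ.prod (bern l)

/-- `z` is the common value of `lim_n Z_n(θ)^{1/n}` over `θ ≥ 1`. -/
def IsZlim (b : ℕ) (P : Measure (ℕ → ℝ)) (z : ℝ) : Prop :=
  ∀ θ : ℝ, 1 ≤ θ →
    Tendsto (fun n : ℕ => Zfun b P n θ ^ (1 / (n : ℝ))) atTop (nhds z)

/-- `ψ θ = lim_n Z_n(θ) z^{-n}` for all `θ ≥ 0`. -/
def IsPsiFun (b : ℕ) (P : Measure (ℕ → ℝ)) (z : ℝ) (ψ : ℝ → ℝ) : Prop :=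
  ∀ θ : ℝ, 0 ≤ θ →
    Tendsto (fun n : ℕ => Zfun b P n θ / z ^ n) atTop (nhds (ψ θ))

/-- `Phat` is the limit of `P_n^{(θ)}` (tested on bounded measurable functions of
finitely many coordinates), independently of `θ ≥ 1`. -/
def IsLawQhat (b : ℕ) (P : Measure (ℕ → ℝ)) (Phat : Measure (ℕ → ℝ)) : Prop :=
  IsProbabilityMeasure Phat ∧
  ∀ θ : ℝ, 1 ≤ θ → ∀ k : ℕ, ∀ f : (ℕ → ℝ) → ℝ, Measurable f →
    (∃ M : ℝ, ∀ y, |f y| ≤ M) →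
    (∀ y y' : ℕ → ℝ, (∀ i, 1 ≤ i → i ≤ k → y i = y' i) → f y = f y') →
    Tendsto (fun n : ℕ => ∫ y, f y ∂(PnTheta b P n θ)) atTop (nhds (∫ y, f y ∂Phat))

/-- The class `M♭`: probability measures on `[0,1]`, absolutely continuous with a bounded
density w.r.t. Lebesgue measure, giving positive mass to `[1 - 1/b, 1]`. -/
def MFlat (b : ℕ) (ρ : Measure ℝ) : Prop :=
  IsProbabilityMeasure ρ ∧ ρ ((Set.Icc (0 : ℝ) 1)ᶜ) = 0 ∧
  (∃ C : NNReal, ∀ s : Set ℝ, ρ s ≤ C * volume s) ∧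
  0 < ρ (Set.Icc (1 - 1 / (b : ℝ)) 1)

/-- The defining property of `c_ρ`. -/
def IsCrho (b : ℕ) (ρ : Measure ℝ) (Phat : Measure (ℕ → ℝ)) (ψ : ℝ → ℝ) (c : ℝ) : Prop :=
  0 < c ∧
  1 / c ^ 2 = ((b : ℝ) - 1) / 2 *
    ∫ y, (∫ x, ψ (x + Qinf b y / (b : ℝ)) ∂ρ) ^ 2
      ∂(ProbabilityTheory.cond Phat {y | 1 ≤ Qinf b y})

/-- `Q_σ^{(θ)}` on the tree: `Q_∅ = θ`, `Q_σ = X_σ + Q_{m(σ)}/b`. -/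
noncomputable def treeQ (b : ℕ) (θ : ℝ) (x : V b → ℝ) : V b → ℝ
  | [] => θ
  | a :: l => x (a :: l) + treeQ b θ x l / (b : ℝ)





/-- `Qseq` only depends on the first `k` coordinates. -/
lemma Qseq_congr (b : ℕ) (θ : ℝ) {x y : ℕ → ℝ} : ∀ {k : ℕ},
    (∀ i, 1 ≤ i → i ≤ k → x i = y i) → Qseq b θ x k = Qseq b θ y k
  | 0, _ => rfl
  | k + 1, h => by
      rw [Qseq, Qseq, h (k+1) (by omega) le_rfl,
        Qseq_congr b θ (fun i h1 h2 => h i h1 (by omega))]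

lemma Qseq_add (b : ℕ) (θ : ℝ) (x : ℕ → ℝ) (n : ℕ) : ∀ k : ℕ,
    Qseq b θ x (n + k) = Qseq b (Qseq b θ x n) (fun i => x (n + i)) k
  | 0 => rfl
  | k + 1 => by
      rw [show n + (k+1) = (n+k) + 1 from rfl, Qseq, Qseq_add b θ x n k]; rfl

lemma Qseq_mono (b : ℕ) (hb : 2 ≤ b) {θ θ' : ℝ} (h : θ ≤ θ') (x : ℕ → ℝ) :
    ∀ k : ℕ, Qseq b θ x k ≤ Qseq b θ' x k
  | 0 => h
  | k + 1 => by
      have hb' : (0:ℝ) < (b:ℝ) := by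
        have : (2:ℝ) ≤ (b:ℝ) := by exact_mod_cast hb
        linarith
      rw [Qseq, Qseq]
      have := Qseq_mono b hb h x k
      gcongr

/-- `θ* = b/(b-1)` is preserved if inputs are `≤ 1`. -/
noncomputable def thetaStar (b : ℕ) : ℝ := (b : ℝ) / ((b : ℝ) - 1)

lemma one_le_thetaStar (b : ℕ) (hb : 2 ≤ b) : 1 ≤ thetaStar b := by
  have h1 : (2:ℝ) ≤ (b:ℝ) := by exact_mod_cast hb
  rw [thetaStar, le_div_iff₀ (by linarith)]
  linarith

lemma Qseq_le_thetaStar (b : ℕ) (hb : 2 ≤ b) {x : ℕ → ℝ} : ∀ {n : ℕ},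
    (∀ i, 1 ≤ i → i ≤ n → x i ≤ 1) → Qseq b (thetaStar b) x n ≤ thetaStar b
  | 0, _ => le_rfl
  | n + 1, h => by
      have h1 : (2:ℝ) ≤ (b:ℝ) := by exact_mod_cast hb
      have ih := Qseq_le_thetaStar b hb (n := n) (fun i hi1 hi2 => h i hi1 (by omega))
      rw [Qseq]
      have hx := h (n+1) (by omega) le_rfl
      have hb1 : (b:ℝ) - 1 ≠ 0 := by linarith
      have hb0 : (b:ℝ) ≠ 0 := by linarith
      have hkey : 1 + thetaStar b / (b:ℝ) = thetaStar b := by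
        rw [thetaStar]; field_simp; ring
      have : Qseq b (thetaStar b) x n / (b:ℝ) ≤ thetaStar b / (b:ℝ) := by gcongr
      linarith

lemma measurable_Qseq (b : ℕ) (θ : ℝ) : ∀ k : ℕ, Measurable fun x : ℕ → ℝ => Qseq b θ x k
  | 0 => measurable_const
  | k + 1 => by
      simp only [Qseq]
      exact (measurable_pi_apply _).add ((measurable_Qseq b θ k).div_const _)

/-- The survival event. -/
def Ev (b n : ℕ) (θ : ℝ) : Set (ℕ → ℝ) := {x | ∀ k ≤ n, 1 ≤ Qseq b θ x k}

lemma measurableSet_Ev (b n : ℕ) (θ : ℝ) : MeasurableSet (Ev b n θ) := by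
  have : Ev b n θ = ⋂ k, ⋂ (_ : k ≤ n), {x | 1 ≤ Qseq b θ x k} := by
    ext x; simp [Ev]
  rw [this]
  exact MeasurableSet.iInter fun k => MeasurableSet.iInter fun _ =>
    measurableSet_le measurable_const (measurable_Qseq b θ k)

lemma Ev_congr (b n : ℕ) (θ : ℝ) {x y : ℕ → ℝ} (h : ∀ i, 1 ≤ i → i ≤ n → x i = y i) :
    x ∈ Ev b n θ ↔ y ∈ Ev b n θ := by
  constructor <;> intro hx k hk <;>
    [rw [← Qseq_congr b θ (fun i h1 h2 => h i h1 (h2.trans hk))];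
     rw [Qseq_congr b θ (fun i h1 h2 => h i h1 (h2.trans hk))]] <;> exact hx k hk

/-- The mixture measure. -/
noncomputable def mix (ρ ρ' : Measure ℝ) (α : ℝ) : Measure ℝ :=
  ENNReal.ofReal α • ρ + ENNReal.ofReal (1 - α) • ρ'


/-- Projection onto `m` coordinates, starting after offset `n`. -/
def projO (n m : ℕ) : (ℕ → ℝ) → (Fin m → ℝ) := fun x i => x (n + (i : ℕ) + 1)

lemma measurable_projO (n m : ℕ) : Measurable (projO n m) :=
  measurable_pi_lambda _ fun _ => measurable_pi_apply _

lemma map_projO {μ : Measure ℝ} {P : Measure (ℕ → ℝ)} (hP : IsProjIID μ P) (n m : ℕ) :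
    Measure.map (projO n m) P = Measure.pi (fun _ : Fin m => μ) := by
  obtain ⟨hprob, hindep, hmarg⟩ := hP
  haveI := hprob
  haveI : IsProbabilityMeasure μ := by
    rw [← hmarg 0]; exact Measure.isProbabilityMeasure_map (measurable_pi_apply 0).aemeasurable
  refine (Measure.pi_eq fun s hs => ?_).symm
  classical
  -- the family of one-coordinate sets
  set sets : ℕ → Set ℝ := fun j =>
    if h : 1 ≤ j - n ∧ j - n ≤ m ∧ n + 1 ≤ j then s ⟨j - n - 1, by omega⟩ else univ with hsets
  have hsets_eval : ∀ i : Fin m, sets (n + (i : ℕ) + 1) = s i := by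
    intro i
    have h1 : 1 ≤ n + (i:ℕ) + 1 - n ∧ n + (i:ℕ) + 1 - n ≤ m ∧ n + 1 ≤ n + (i:ℕ) + 1 := by
      refine ⟨by omega, by omega, by omega⟩
    simp only [hsets]
    rw [dif_pos h1]
    simp only [show n + (i:ℕ) + 1 - n - 1 = (i:ℕ) from by omega, Fin.eta]
  have hsets_meas : ∀ j, MeasurableSet (sets j) := by
    intro j; simp only [hsets]
    split
    · exact hs _
    · exact MeasurableSet.univ
  set S : Finset ℕ := Finset.image (fun i : Fin m => n + (i : ℕ) + 1) Finset.univ with hS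
  have hinj : Function.Injective (fun i : Fin m => n + (i : ℕ) + 1) := by
    intro a b h; dsimp only at h; exact Fin.ext (by omega)
  have hpre : projO n m ⁻¹' (Set.pi univ s) = ⋂ j ∈ S, (fun x : ℕ → ℝ => x j) ⁻¹' sets j := by
    ext x
    simp only [mem_preimage, Set.mem_pi, mem_univ, forall_true_left, Set.mem_iInter, hS,
      Finset.mem_image, Finset.mem_univ, true_and]
    constructor
    · rintro h j ⟨i, rfl⟩
      rw [hsets_eval i]; exact h i
    · intro h i
      rw [← hsets_eval i]; exact h _ ⟨i, rfl⟩
  rw [Measure.map_apply (measurable_projO n m) (MeasurableSet.univ_pi hs), hpre,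
    hindep.measure_inter_preimage_eq_mul S (fun j _ => hsets_meas j),
    Finset.prod_image (fun a _ b _ h => hinj h)]
  refine Finset.prod_congr rfl fun i _ => ?_
  rw [← Measure.map_apply (measurable_pi_apply (n + (i : ℕ) + 1)) (hsets_meas _),
    hmarg, hsets_eval]
/-- Extension of a finite vector to `ℕ → ℝ` (coordinates `1..m`). -/
noncomputable def extF (m : ℕ) : (Fin m → ℝ) → (ℕ → ℝ) := fun v j =>
  if h : 1 ≤ j ∧ j ≤ m then v ⟨j - 1, by omega⟩ else 0

lemma measurable_extF (m : ℕ) : Measurable (extF m) :=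
  measurable_pi_lambda _ fun j => by
    by_cases h : 1 ≤ j ∧ j ≤ m
    · simp only [extF, dif_pos h]; exact measurable_pi_apply _
    · simp only [extF, dif_neg h]; exact measurable_const

/-- The survival event as a subset of `Fin m → ℝ`. -/
noncomputable def SEv (b m : ℕ) (θ : ℝ) : Set (Fin m → ℝ) := extF m ⁻¹' Ev b m θ

lemma measurableSet_SEv (b m : ℕ) (θ : ℝ) : MeasurableSet (SEv b m θ) :=
  (measurableSet_Ev b m θ).preimage (measurable_extF m)

/-- The shifted survival event. -/
def EvS (b n m : ℕ) (θ : ℝ) : Set (ℕ → ℝ) :=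
  {x | ∀ k ≤ m, 1 ≤ Qseq b θ (fun i => x (n + i)) k}

lemma EvS_eq_preimage (b n m : ℕ) (θ : ℝ) :
    EvS b n m θ = (fun x : ℕ → ℝ => fun i => x (n + i)) ⁻¹' Ev b m θ := rfl

lemma measurableSet_EvS (b n m : ℕ) (θ : ℝ) : MeasurableSet (EvS b n m θ) := by
  rw [EvS_eq_preimage]
  exact (measurableSet_Ev b m θ).preimage
    (measurable_pi_lambda _ fun i => measurable_pi_apply _)

lemma projO_preimage_SEv (b n m : ℕ) (θ : ℝ) :
    projO n m ⁻¹' SEv b m θ = EvS b n m θ := by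
  ext x
  have hagree : ∀ i, 1 ≤ i → i ≤ m → extF m (projO n m x) i = x (n + i) := by
    intro i h1 h2
    simp only [extF, projO, dif_pos (And.intro h1 h2)]
    congr 1; omega
  simp only [SEv, mem_preimage, EvS, Set.mem_setOf_eq, Ev]
  constructor <;> intro h k hk <;>
    [ rw [← Qseq_congr b θ (fun i hi1 hi2 => hagree i hi1 (hi2.trans hk))];
      rw [Qseq_congr b θ (fun i hi1 hi2 => hagree i hi1 (hi2.trans hk))] ] <;>
    exact h k hk

lemma EvS_zero (b m : ℕ) (θ : ℝ) : EvS b 0 m θ = Ev b m θ := by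
  ext x
  simp only [EvS, Ev, Set.mem_setOf_eq]
  constructor <;> intro h k hk <;>
    [ rw [Qseq_congr b θ (y := fun i => x (0 + i)) (fun i _ _ => by simp)];
      rw [← Qseq_congr b θ (x := x) (y := fun i => x (0 + i)) (fun i _ _ => by simp)] ] <;>
    exact h k hk

/-- The probability of the shifted event does not depend on the offset. -/
lemma prob_EvS {μ : Measure ℝ} {P : Measure (ℕ → ℝ)} (hP : IsProjIID μ P) (b n m : ℕ) (θ : ℝ) :
    P (EvS b n m θ) = P (Ev b m θ) := by
  have h1 : ∀ n' : ℕ, P (EvS b n' m θ) = Measure.pi (fun _ : Fin m => μ) (SEv b m θ) := by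
    intro n'
    rw [← projO_preimage_SEv, ← Measure.map_apply (measurable_projO n' m)
      (measurableSet_SEv b m θ), map_projO hP]
  rw [h1 n, ← h1 0, EvS_zero]

lemma Ev_inter_EvS {μ : Measure ℝ} {P : Measure (ℕ → ℝ)} (hP : IsProjIID μ P)
    (b n m : ℕ) (θ θ' : ℝ) :
    P (Ev b n θ ∩ EvS b n m θ') = P (Ev b n θ) * P (EvS b n m θ') := by
  classical
  obtain ⟨hprob, hindep, hmarg⟩ := hP
  set S : Finset ℕ := Finset.Icc 1 n with hSdef
  set T : Finset ℕ := Finset.Icc (n + 1) (n + m) with hTdef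
  have hdisj : Disjoint S T := by
    rw [Finset.disjoint_left]; intro a haS haT
    rw [hSdef, Finset.mem_Icc] at haS; rw [hTdef, Finset.mem_Icc] at haT; omega
  have hind := hindep.indepFun_finset S T hdisj (fun i => measurable_pi_apply i)
  set extS : (↥S → ℝ) → ℕ → ℝ := fun v j => if h : j ∈ S then v ⟨j, h⟩ else 0 with hextS
  set extT : (↥T → ℝ) → ℕ → ℝ := fun v j => if h : j ∈ T then v ⟨j, h⟩ else 0 with hextT
  have hmS : Measurable extS := measurable_pi_lambda _ fun j => by
    by_cases h : j ∈ S
    · simp only [hextS, dif_pos h]; exact measurable_pi_apply _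
    · simp only [hextS, dif_neg h]; exact measurable_const
  have hmT : Measurable extT := measurable_pi_lambda _ fun j => by
    by_cases h : j ∈ T
    · simp only [hextT, dif_pos h]; exact measurable_pi_apply _
    · simp only [hextT, dif_neg h]; exact measurable_const
  have hA : (fun x : ℕ → ℝ => fun i : ↥S => x i) ⁻¹' (extS ⁻¹' Ev b n θ) = Ev b n θ := by
    ext x
    simp only [mem_preimage]
    refine Ev_congr b n θ fun i h1 h2 => ?_
    have hiS : i ∈ S := by rw [hSdef, Finset.mem_Icc]; exact ⟨h1, h2⟩
    simp only [hextS, dif_pos hiS]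
  have hB : (fun x : ℕ → ℝ => fun i : ↥T => x i) ⁻¹' (extT ⁻¹' EvS b n m θ') = EvS b n m θ' := by
    ext x
    simp only [mem_preimage, EvS, Set.mem_setOf_eq]
    have hagree : ∀ i, 1 ≤ i → i ≤ m → extT (fun i : ↥T => x i) (n + i) = x (n + i) := by
      intro i h1 h2
      have hiT : n + i ∈ T := by rw [hTdef, Finset.mem_Icc]; omega
      simp only [hextT, dif_pos hiT]
    constructor <;> intro h k hk <;>
      [ rw [← Qseq_congr b θ' (fun i hi1 hi2 => hagree i hi1 (hi2.trans hk))];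
        rw [Qseq_congr b θ' (fun i hi1 hi2 => hagree i hi1 (hi2.trans hk))] ] <;>
      exact h k hk
  have := hind.measure_inter_preimage_eq_mul (extS ⁻¹' Ev b n θ) (extT ⁻¹' EvS b n m θ')
    ((measurableSet_Ev b n θ).preimage hmS)
    ((measurableSet_EvS b n m θ').preimage hmT)
  rw [hA, hB] at this
  exact this
lemma Ev_super (b : ℕ) (hb : 2 ≤ b) (n m : ℕ) {θ : ℝ} (hθ : 1 ≤ θ) :
    Ev b n θ ∩ EvS b n m 1 ⊆ Ev b (n + m) θ := by
  rintro x ⟨hx1, hx2⟩ k hk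
  by_cases hkn : k ≤ n
  · exact hx1 k hkn
  · have hkeq : k = n + (k - n) := by omega
    rw [hkeq, Qseq_add]
    have h1 : 1 ≤ Qseq b θ x n := hx1 n le_rfl
    calc (1:ℝ) ≤ Qseq b 1 (fun i => x (n + i)) (k - n) := hx2 (k - n) (by omega)
      _ ≤ Qseq b (Qseq b θ x n) (fun i => x (n + i)) (k - n) := Qseq_mono b hb h1 _ _

lemma Ev_sub (b : ℕ) (hb : 2 ≤ b) (n m : ℕ) {x : ℕ → ℝ}
    (hx : ∀ i, 1 ≤ i → i ≤ n → x i ≤ 1) (hmem : x ∈ Ev b (n + m) (thetaStar b)) :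
    x ∈ Ev b n (thetaStar b) ∩ EvS b n m (thetaStar b) := by
  refine ⟨fun k hk => hmem k (by omega), fun k hk => ?_⟩
  have hQn : Qseq b (thetaStar b) x n ≤ thetaStar b := Qseq_le_thetaStar b hb hx
  calc (1:ℝ) ≤ Qseq b (thetaStar b) x (n + k) := hmem (n + k) (by omega)
    _ = Qseq b (Qseq b (thetaStar b) x n) (fun i => x (n + i)) k := Qseq_add b _ x n k
    _ ≤ Qseq b (thetaStar b) (fun i => x (n + i)) k := Qseq_mono b hb hQn _ _

/-- The coordinates are a.s. at most `1`. -/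
lemma prob_bad {μ : Measure ℝ} {P : Measure (ℕ → ℝ)} (hP : IsProjIID μ P)
    (hμs : μ ((Set.Icc (0:ℝ) 1)ᶜ) = 0) (n : ℕ) :
    P {x : ℕ → ℝ | ¬ ∀ i, 1 ≤ i → i ≤ n → x i ≤ 1} = 0 := by
  obtain ⟨hprob, hindep, hmarg⟩ := hP
  have hsub : {x : ℕ → ℝ | ¬ ∀ i, 1 ≤ i → i ≤ n → x i ≤ 1} ⊆
      ⋃ i ∈ Finset.Icc 1 n, (fun x : ℕ → ℝ => x i) ⁻¹' (Set.Icc (0:ℝ) 1)ᶜ := by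
    intro x hx
    push_neg at hx
    obtain ⟨i, h1, h2, h3⟩ := hx
    refine Set.mem_biUnion (Finset.mem_Icc.mpr ⟨h1, h2⟩) ?_
    simp only [mem_preimage, mem_compl_iff, Set.mem_Icc, not_and_or]
    right; linarith
  refine measure_mono_null hsub ?_
  refine (measure_biUnion_null_iff (Finset.Icc 1 n).countable_toSet).2 fun i _ => ?_
  have : MeasurableSet ((Set.Icc (0:ℝ) 1)ᶜ) := measurableSet_Icc.compl
  rw [← Measure.map_apply (measurable_pi_apply i) this, hmarg i]
  exact hμs

/-- Submultiplicativity at `θ*`. -/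
lemma P_submult {μ : Measure ℝ} {P : Measure (ℕ → ℝ)} (hP : IsProjIID μ P)
    (hμs : μ ((Set.Icc (0:ℝ) 1)ᶜ) = 0) (b : ℕ) (hb : 2 ≤ b) (n m : ℕ) :
    P (Ev b (n + m) (thetaStar b)) ≤
      P (Ev b n (thetaStar b)) * P (Ev b m (thetaStar b)) := by
  have hsub : Ev b (n + m) (thetaStar b) ⊆
      (Ev b n (thetaStar b) ∩ EvS b n m (thetaStar b)) ∪
        {x : ℕ → ℝ | ¬ ∀ i, 1 ≤ i → i ≤ n → x i ≤ 1} := by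
    intro x hx
    by_cases hgood : ∀ i, 1 ≤ i → i ≤ n → x i ≤ 1
    · exact Or.inl (Ev_sub b hb n m hgood hx)
    · exact Or.inr hgood
  calc P (Ev b (n + m) (thetaStar b))
      ≤ P ((Ev b n (thetaStar b) ∩ EvS b n m (thetaStar b)) ∪
          {x : ℕ → ℝ | ¬ ∀ i, 1 ≤ i → i ≤ n → x i ≤ 1}) := measure_mono hsub
    _ ≤ P (Ev b n (thetaStar b) ∩ EvS b n m (thetaStar b)) +
          P {x : ℕ → ℝ | ¬ ∀ i, 1 ≤ i → i ≤ n → x i ≤ 1} := measure_union_le _ _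
    _ = P (Ev b n (thetaStar b) ∩ EvS b n m (thetaStar b)) := by
          rw [prob_bad hP hμs n, add_zero]
    _ = P (Ev b n (thetaStar b)) * P (EvS b n m (thetaStar b)) := Ev_inter_EvS hP b n m _ _
    _ = P (Ev b n (thetaStar b)) * P (Ev b m (thetaStar b)) := by rw [prob_EvS hP]

/-- Supermultiplicativity at `θ = 1`. -/
lemma P_supermult {μ : Measure ℝ} {P : Measure (ℕ → ℝ)} (hP : IsProjIID μ P)
    (b : ℕ) (hb : 2 ≤ b) (n m : ℕ) :
    P (Ev b n 1) * P (Ev b m 1) ≤ P (Ev b (n + m) 1) := by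
  calc P (Ev b n 1) * P (Ev b m 1) = P (Ev b n 1) * P (EvS b n m 1) := by rw [prob_EvS hP]
    _ = P (Ev b n 1 ∩ EvS b n m 1) := (Ev_inter_EvS hP b n m _ _).symm
    _ ≤ P (Ev b (n + m) 1) := measure_mono (Ev_super b hb n m le_rfl)

lemma Ev_zero (b : ℕ) {θ : ℝ} (hθ : 1 ≤ θ) : Ev b 0 θ = Set.univ := by
  ext x
  simp only [Ev, Set.mem_setOf_eq, mem_univ, iff_true]
  intro k hk
  rw [Nat.le_zero.mp hk]
  exact hθ
lemma pi_le_pi_add (μ ν κ : Measure ℝ) [IsProbabilityMeasure μ] [IsProbabilityMeasure ν]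
    (ε : ℝ≥0∞) (hκ : κ Set.univ ≤ 2) (hle : μ ≤ ν + ε • κ) :
    ∀ (n : ℕ) (S : Set (Fin n → ℝ)), MeasurableSet S →
      Measure.pi (fun _ : Fin n => μ) S ≤ Measure.pi (fun _ : Fin n => ν) S + n * (2 * ε) := by
  intro n
  induction n with
  | zero =>
      intro S hS
      rw [Measure.pi_of_empty, Measure.pi_of_empty]
      simp
  | succ n ih =>
      intro S hS
      set e := MeasurableEquiv.piFinSuccAbove (fun _ : Fin (n + 1) => ℝ) 0 with he
      have hmpμ := measurePreserving_piFinSuccAbove (fun _ : Fin (n + 1) => μ) 0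
      have hmpν := measurePreserving_piFinSuccAbove (fun _ : Fin (n + 1) => ν) 0
      set T : Set (ℝ × (Fin n → ℝ)) := e.symm ⁻¹' S with hT
      have hTm : MeasurableSet T := e.symm.measurable hS
      have hpre : e ⁻¹' T = S := by ext y; simp [hT]
      have hμeq : Measure.pi (fun _ : Fin (n + 1) => μ) S
          = (μ.prod (Measure.pi fun _ : Fin n => μ)) T := by
        rw [← hpre]; exact hmpμ.measure_preimage hTm.nullMeasurableSet
      have hνeq : Measure.pi (fun _ : Fin (n + 1) => ν) S
          = (ν.prod (Measure.pi fun _ : Fin n => ν)) T := by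
        rw [← hpre]; exact hmpν.measure_preimage hTm.nullMeasurableSet
      rw [hμeq, hνeq]
      have hslice : ∀ x : ℝ, MeasurableSet (Prod.mk x ⁻¹' T) := fun x =>
        measurable_prodMk_left hTm
      calc (μ.prod (Measure.pi fun _ : Fin n => μ)) T
          = ∫⁻ x, (Measure.pi fun _ : Fin n => μ) (Prod.mk x ⁻¹' T) ∂μ :=
            Measure.prod_apply hTm
        _ ≤ ∫⁻ x, ((Measure.pi fun _ : Fin n => ν) (Prod.mk x ⁻¹' T) + n * (2 * ε)) ∂μ :=
            lintegral_mono fun x => ih _ (hslice x)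
        _ = ∫⁻ x, (Measure.pi fun _ : Fin n => ν) (Prod.mk x ⁻¹' T) ∂μ + n * (2 * ε) := by
            rw [lintegral_add_right _ measurable_const, lintegral_const, measure_univ, mul_one]
        _ ≤ (∫⁻ x, (Measure.pi fun _ : Fin n => ν) (Prod.mk x ⁻¹' T) ∂ν
              + ε * ∫⁻ x, (Measure.pi fun _ : Fin n => ν) (Prod.mk x ⁻¹' T) ∂κ) + n * (2 * ε) := by
            gcongr
            calc ∫⁻ x, (Measure.pi fun _ : Fin n => ν) (Prod.mk x ⁻¹' T) ∂μ
                ≤ ∫⁻ x, (Measure.pi fun _ : Fin n => ν) (Prod.mk x ⁻¹' T) ∂(ν + ε • κ) :=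
                  lintegral_mono' hle le_rfl
              _ = _ := by rw [lintegral_add_measure, lintegral_smul_measure, smul_eq_mul]
        _ ≤ (∫⁻ x, (Measure.pi fun _ : Fin n => ν) (Prod.mk x ⁻¹' T) ∂ν + ε * 2) + n * (2 * ε) := by
            gcongr
            calc ∫⁻ x, (Measure.pi fun _ : Fin n => ν) (Prod.mk x ⁻¹' T) ∂κ
                ≤ ∫⁻ _x, 1 ∂κ := lintegral_mono fun x => prob_le_one
              _ = κ Set.univ := by rw [lintegral_one]
              _ ≤ 2 := hκ
        _ = (ν.prod (Measure.pi fun _ : Fin n => ν)) T + (n + 1 : ℕ) * (2 * ε) := by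
            rw [← Measure.prod_apply hTm]
            push_cast
            ring

lemma mix_prob (ρ ρ' : Measure ℝ) [IsProbabilityMeasure ρ] [IsProbabilityMeasure ρ'] {α : ℝ}
    (h0 : 0 ≤ α) (h1 : α ≤ 1) : IsProbabilityMeasure (mix ρ ρ' α) := by
  constructor
  rw [mix, Measure.add_apply, Measure.smul_apply, Measure.smul_apply, measure_univ, measure_univ,
    smul_eq_mul, smul_eq_mul, mul_one, mul_one, ← ENNReal.ofReal_add h0 (by linarith)]
  norm_num

lemma mix_le (ρ ρ' : Measure ℝ) {α β : ℝ} (hβ0 : 0 ≤ β) (hβ1 : β ≤ 1) :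
    mix ρ ρ' α ≤ mix ρ ρ' β + ENNReal.ofReal |α - β| • (ρ + ρ') := by
  refine Measure.le_intro fun s hs _ => ?_
  have habs : (0:ℝ) ≤ |α - β| := abs_nonneg _
  have h1 : ENNReal.ofReal α ≤ ENNReal.ofReal β + ENNReal.ofReal |α - β| := by
    rw [← ENNReal.ofReal_add hβ0 habs]
    exact ENNReal.ofReal_le_ofReal (by cases abs_cases (α - β) <;> linarith)
  have h2 : ENNReal.ofReal (1 - α) ≤ ENNReal.ofReal (1 - β) + ENNReal.ofReal |α - β| := by
    rw [← ENNReal.ofReal_add (by linarith) habs]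
    exact ENNReal.ofReal_le_ofReal (by cases abs_cases (α - β) <;> linarith)
  simp only [mix, Measure.add_apply, Measure.smul_apply, smul_eq_mul]
  calc ENNReal.ofReal α * ρ s + ENNReal.ofReal (1 - α) * ρ' s
      ≤ (ENNReal.ofReal β + ENNReal.ofReal |α - β|) * ρ s
        + (ENNReal.ofReal (1 - β) + ENNReal.ofReal |α - β|) * ρ' s := by gcongr
    _ = (ENNReal.ofReal β * ρ s + ENNReal.ofReal (1 - β) * ρ' s)
        + ENNReal.ofReal |α - β| * (ρ s + ρ' s) := by ring

lemma prob_Ev_pi {μ : Measure ℝ} {P : Measure (ℕ → ℝ)} (hP : IsProjIID μ P) (b n : ℕ) (θ : ℝ) :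
    P (Ev b n θ) = Measure.pi (fun _ : Fin n => μ) (SEv b n θ) := by
  rw [← EvS_zero b n θ, ← projO_preimage_SEv, ← Measure.map_apply (measurable_projO 0 n)
    (measurableSet_SEv b n θ), map_projO hP]
lemma Z_lip {ρ ρ' : Measure ℝ} [IsProbabilityMeasure ρ] [IsProbabilityMeasure ρ']
    {Pa Pb : Measure (ℕ → ℝ)} {α β : ℝ}
    (hα : α ∈ Set.Icc (0:ℝ) 1) (hβ : β ∈ Set.Icc (0:ℝ) 1)
    (hPa : IsProjIID (mix ρ ρ' α) Pa) (hPb : IsProjIID (mix ρ ρ' β) Pb) (b n : ℕ) (θ : ℝ) :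
    (Pa (Ev b n θ)).toReal ≤ (Pb (Ev b n θ)).toReal + n * (2 * |α - β|) := by
  haveI hma : IsProbabilityMeasure (mix ρ ρ' α) := mix_prob ρ ρ' hα.1 hα.2
  haveI hmb : IsProbabilityMeasure (mix ρ ρ' β) := mix_prob ρ ρ' hβ.1 hβ.2
  have hκ : (ρ + ρ') Set.univ ≤ 2 := by
    rw [Measure.add_apply, measure_univ, measure_univ]; norm_num
  have hle := mix_le ρ ρ' (α := α) hβ.1 hβ.2
  have hkey := pi_le_pi_add (mix ρ ρ' α) (mix ρ ρ' β) (ρ + ρ')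
    (ENNReal.ofReal |α - β|) hκ hle n (SEv b n θ) (measurableSet_SEv b n θ)
  rw [← prob_Ev_pi hPa, ← prob_Ev_pi hPb] at hkey
  have hfin : Pb (Ev b n θ) + n * (2 * ENNReal.ofReal |α - β|) ≠ ⊤ := by
    haveI := hPb.1
    exact ENNReal.add_ne_top.2 ⟨measure_ne_top _ _, by
      exact ENNReal.mul_ne_top (by simp) (ENNReal.mul_ne_top (by simp) ENNReal.ofReal_ne_top)⟩
  calc (Pa (Ev b n θ)).toReal
      ≤ (Pb (Ev b n θ) + n * (2 * ENNReal.ofReal |α - β|)).toReal :=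
        ENNReal.toReal_mono hfin hkey
    _ = (Pb (Ev b n θ)).toReal + n * (2 * |α - β|) := by
        haveI := hPb.1
        rw [ENNReal.toReal_add (measure_ne_top _ _) (ENNReal.add_ne_top.1 hfin).2,
          ENNReal.toReal_mul, ENNReal.toReal_mul, ENNReal.toReal_ofReal (abs_nonneg _)]
        norm_num

lemma Z_pow_upper {μ : Measure ℝ} {P : Measure (ℕ → ℝ)} (hP : IsProjIID μ P)
    (hμs : μ ((Set.Icc (0:ℝ) 1)ᶜ) = 0) (b : ℕ) (hb : 2 ≤ b) (n : ℕ) :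
    ∀ k : ℕ, (P (Ev b (k * n) (thetaStar b))).toReal ≤
      ((P (Ev b n (thetaStar b))).toReal) ^ k := by
  haveI := hP.1
  intro k
  induction k with
  | zero => simp [Ev_zero b (one_le_thetaStar b hb)]
  | succ k ih =>
      have h1 : P (Ev b (k * n + n) (thetaStar b)) ≤
          P (Ev b (k * n) (thetaStar b)) * P (Ev b n (thetaStar b)) :=
        P_submult hP hμs b hb (k * n) n
      have h2 : (P (Ev b (k * n + n) (thetaStar b))).toReal ≤
          (P (Ev b (k * n) (thetaStar b))).toReal * (P (Ev b n (thetaStar b))).toReal := by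
        rw [← ENNReal.toReal_mul]
        exact ENNReal.toReal_mono (ENNReal.mul_ne_top (measure_ne_top _ _) (measure_ne_top _ _)) h1
      rw [Nat.succ_mul, pow_succ]
      refine h2.trans ?_
      exact mul_le_mul_of_nonneg_right ih ENNReal.toReal_nonneg

lemma Z_pow_lower {μ : Measure ℝ} {P : Measure (ℕ → ℝ)} (hP : IsProjIID μ P)
    (b : ℕ) (hb : 2 ≤ b) (n : ℕ) :
    ∀ k : ℕ, ((P (Ev b n 1)).toReal) ^ k ≤ (P (Ev b (k * n) 1)).toReal := by
  haveI := hP.1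
  intro k
  induction k with
  | zero => simp [Ev_zero b (le_refl (1:ℝ))]
  | succ k ih =>
      have h1 : P (Ev b (k * n) 1) * P (Ev b n 1) ≤ P (Ev b (k * n + n) 1) :=
        P_supermult hP b hb (k * n) n
      have h2 : (P (Ev b (k * n) 1)).toReal * (P (Ev b n 1)).toReal ≤
          (P (Ev b (k * n + n) 1)).toReal := by
        rw [← ENNReal.toReal_mul]
        exact ENNReal.toReal_mono (measure_ne_top _ _) h1
      rw [Nat.succ_mul, pow_succ]
      refine le_trans ?_ h2
      exact mul_le_mul_of_nonneg_right ih ENNReal.toReal_nonneg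


lemma Zfun_eq (b : ℕ) (P : Measure (ℕ → ℝ)) (n : ℕ) (θ : ℝ) :
    Zfun b P n θ = (P (Ev b n θ)).toReal := rfl

lemma tendsto_mul_const_atTop {n : ℕ} (hn : 1 ≤ n) :
    Tendsto (fun k : ℕ => k * n) atTop atTop :=
  tendsto_atTop_mono (fun k => by
    calc k = k * 1 := (mul_one k).symm
      _ ≤ k * n := Nat.mul_le_mul_left k hn) tendsto_id

lemma rpow_aux {k n : ℕ} (hk : 1 ≤ k) (hn : 1 ≤ n) {A : ℝ} (hA : 0 ≤ A) :
    (A ^ k) ^ (1 / ((k * n : ℕ) : ℝ)) = A ^ (1 / (n : ℝ)) := by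
  have hk0 : ((k:ℕ):ℝ) ≠ 0 := by
    have : (1:ℝ) ≤ (k:ℝ) := by exact_mod_cast hk
    linarith
  have hn0 : ((n:ℕ):ℝ) ≠ 0 := by
    have : (1:ℝ) ≤ (n:ℝ) := by exact_mod_cast hn
    linarith
  rw [← Real.rpow_natCast A k, ← Real.rpow_mul hA]
  congr 1
  push_cast
  field_simp

lemma z_le_upper {μ : Measure ℝ} {P : Measure (ℕ → ℝ)} {z : ℝ} (hP : IsProjIID μ P)
    (hμs : μ ((Set.Icc (0:ℝ) 1)ᶜ) = 0) (b : ℕ) (hb : 2 ≤ b) (hz : IsZlim b P z)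
    {n : ℕ} (hn : 1 ≤ n) : z ≤ ((P (Ev b n (thetaStar b))).toReal) ^ (1 / (n : ℝ)) := by
  have htend := (hz (thetaStar b) (one_le_thetaStar b hb)).comp (tendsto_mul_const_atTop hn)
  refine le_of_tendsto htend ?_
  filter_upwards [eventually_ge_atTop 1] with k hk
  have hA0 : (0:ℝ) ≤ (P (Ev b n (thetaStar b))).toReal := ENNReal.toReal_nonneg
  have h1 : Zfun b P (k * n) (thetaStar b) ≤ ((P (Ev b n (thetaStar b))).toReal) ^ k := by
    rw [Zfun_eq]; exact Z_pow_upper hP hμs b hb n k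
  have h2 : (0:ℝ) ≤ Zfun b P (k * n) (thetaStar b) := ENNReal.toReal_nonneg
  calc Zfun b P (k * n) (thetaStar b) ^ (1 / ((k * n : ℕ) : ℝ))
      ≤ (((P (Ev b n (thetaStar b))).toReal) ^ k) ^ (1 / ((k * n : ℕ) : ℝ)) :=
        Real.rpow_le_rpow h2 h1 (by positivity)
    _ = ((P (Ev b n (thetaStar b))).toReal) ^ (1 / (n : ℝ)) := rpow_aux hk hn hA0

lemma z_ge_lower {μ : Measure ℝ} {P : Measure (ℕ → ℝ)} {z : ℝ} (hP : IsProjIID μ P)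
    (b : ℕ) (hb : 2 ≤ b) (hz : IsZlim b P z)
    {n : ℕ} (hn : 1 ≤ n) : ((P (Ev b n 1)).toReal) ^ (1 / (n : ℝ)) ≤ z := by
  have htend := (hz 1 le_rfl).comp (tendsto_mul_const_atTop hn)
  refine ge_of_tendsto htend ?_
  filter_upwards [eventually_ge_atTop 1] with k hk
  have hA0 : (0:ℝ) ≤ (P (Ev b n 1)).toReal := ENNReal.toReal_nonneg
  have h1 : ((P (Ev b n 1)).toReal) ^ k ≤ Zfun b P (k * n) 1 := by
    rw [Zfun_eq]; exact Z_pow_lower hP b hb n k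
  calc ((P (Ev b n 1)).toReal) ^ (1 / (n : ℝ))
      = (((P (Ev b n 1)).toReal) ^ k) ^ (1 / ((k * n : ℕ) : ℝ)) := (rpow_aux hk hn hA0).symm
    _ ≤ Zfun b P (k * n) 1 ^ (1 / ((k * n : ℕ) : ℝ)) :=
        Real.rpow_le_rpow (by positivity) h1 (by positivity)

/-- `α ↦ z(αρ + (1-α)ρ')` is continuous on `[0,1]`. -/
theorem z_continuous_in_mixture
    (b : ℕ) (hb : 2 ≤ b) (ρ ρ' : Measure ℝ)
    (hρ : IsProbabilityMeasure ρ) (hρ' : IsProbabilityMeasure ρ')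
    (hs : ρ ((Set.Icc (0 : ℝ) 1)ᶜ) = 0) (hs' : ρ' ((Set.Icc (0 : ℝ) 1)ᶜ) = 0)
    (P : ℝ → Measure (ℕ → ℝ))
    (hP : ∀ α ∈ Set.Icc (0 : ℝ) 1,
      IsProjIID (ENNReal.ofReal α • ρ + ENNReal.ofReal (1 - α) • ρ') (P α))
    (z : ℝ → ℝ) (hz : ∀ α ∈ Set.Icc (0 : ℝ) 1, IsZlim b (P α) (z α)) :
    ContinuousOn z (Set.Icc 0 1) := by
  haveI := hρ; haveI := hρ'
  intro α₀ hα₀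
  have hbR : (1:ℝ) ≤ thetaStar b := one_le_thetaStar b hb
  have hPm : ∀ α ∈ Set.Icc (0:ℝ) 1, IsProjIID (mix ρ ρ' α) (P α) := hP
  have hmix_s : ∀ α : ℝ, (mix ρ ρ' α) ((Set.Icc (0:ℝ) 1)ᶜ) = 0 := by
    intro α
    rw [mix, Measure.add_apply, Measure.smul_apply, Measure.smul_apply, hs, hs']
    simp
  set g : ℕ → ℝ → ℝ := fun n α => ((P α) (Ev b n (thetaStar b))).toReal with hgdef
  set f : ℕ → ℝ → ℝ := fun n α => ((P α) (Ev b n 1)).toReal with hfdef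
  have hub : ∀ α ∈ Set.Icc (0:ℝ) 1, ∀ n : ℕ, 1 ≤ n → z α ≤ (g n α) ^ (1/(n:ℝ)) :=
    fun α hα n hn => z_le_upper (hPm α hα) (hmix_s α) b hb (hz α hα) hn
  have hlb : ∀ α ∈ Set.Icc (0:ℝ) 1, ∀ n : ℕ, 1 ≤ n → (f n α) ^ (1/(n:ℝ)) ≤ z α :=
    fun α hα n hn => z_ge_lower (hPm α hα) b hb (hz α hα) hn
  have hcont : ∀ (n : ℕ) (θ : ℝ),
      ContinuousOn (fun α => ((P α) (Ev b n θ)).toReal) (Set.Icc (0:ℝ) 1) := by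
    intro n θ
    have hlip : LipschitzOnWith (2 * n : ℝ≥0)
        (fun α => ((P α) (Ev b n θ)).toReal) (Set.Icc (0:ℝ) 1) := by
      refine LipschitzOnWith.of_dist_le_mul fun x hx y hy => ?_
      rw [Real.dist_eq, Real.dist_eq]
      have h1 := Z_lip hx hy (hPm x hx) (hPm y hy) b n θ
      have h2 := Z_lip hy hx (hPm y hy) (hPm x hx) b n θ
      rw [abs_sub_comm y x] at h2
      have hco : ((2 * n : ℝ≥0) : ℝ) = 2 * (n:ℝ) := by push_cast; ring
      rw [hco, abs_sub_le_iff]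
      constructor <;> [skip; skip] <;> [linarith; linarith]
    exact hlip.continuousOn
  apply Metric.tendsto_nhds.2
  intro ε hε
  have hgz : Tendsto (fun n => (g n α₀) ^ (1/(n:ℝ))) atTop (nhds (z α₀)) :=
    hz α₀ hα₀ (thetaStar b) hbR
  have hfz : Tendsto (fun n => (f n α₀) ^ (1/(n:ℝ))) atTop (nhds (z α₀)) :=
    hz α₀ hα₀ 1 le_rfl
  obtain ⟨N, hN⟩ := Metric.tendsto_atTop.1 hgz (ε/2) (by positivity)
  obtain ⟨M, hM⟩ := Metric.tendsto_atTop.1 hfz (ε/2) (by positivity)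
  set n := max N 1 with hn
  set m := max M 1 with hm
  have hn1 : 1 ≤ n := le_max_right _ _
  have hm1 : 1 ≤ m := le_max_right _ _
  have hn2 : (g n α₀) ^ (1/(n:ℝ)) < z α₀ + ε/2 := by
    have := hN n (le_max_left _ _)
    rw [Real.dist_eq, abs_sub_lt_iff] at this
    linarith [this.1]
  have hm2 : z α₀ - ε/2 < (f m α₀) ^ (1/(m:ℝ)) := by
    have := hM m (le_max_left _ _)
    rw [Real.dist_eq, abs_sub_lt_iff] at this
    linarith [this.2]
  have hGc : ContinuousWithinAt (fun α => (g n α) ^ (1/(n:ℝ))) (Set.Icc (0:ℝ) 1) α₀ :=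
    ((hcont n (thetaStar b)) α₀ hα₀).rpow_const (Or.inr (by positivity))
  have hFc : ContinuousWithinAt (fun α => (f m α) ^ (1/(m:ℝ))) (Set.Icc (0:ℝ) 1) α₀ :=
    ((hcont m 1) α₀ hα₀).rpow_const (Or.inr (by positivity))
  have hev1 : ∀ᶠ α in nhdsWithin α₀ (Set.Icc (0:ℝ) 1), (g n α) ^ (1/(n:ℝ)) < z α₀ + ε/2 :=
    hGc.eventually_lt_const hn2
  have hev2 : ∀ᶠ α in nhdsWithin α₀ (Set.Icc (0:ℝ) 1), z α₀ - ε/2 < (f m α) ^ (1/(m:ℝ)) :=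
    hFc.eventually_const_lt hm2
  filter_upwards [hev1, hev2, self_mem_nhdsWithin] with α h1 h2 hαmem
  rw [Real.dist_eq, abs_sub_lt_iff]
  have hu := hub α hαmem n hn1
  have hl := hlb α hαmem m hm1
  constructor <;> linarith


end OrgCrit
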